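/- For every x ≥ 8, θ(x) < (x - 4)·log 4, where θ(x) = ∑_{p ≤ x} log p is the Chebyshev theta function with the sum over primes p ≤ x. -/

import Mathlib

open Finset Nat

private theorem primorial_mul_lt : ∀ n : ℕ, 8 ≤ n → primorial n * 256 < 4 ^ n := by
  intro n
  induction' n using Nat.strong_induction_on with n ihn
  intro hn
  rcases lt_or_ge n 15 with h15 | h15
  · interval_cases n <;> decide
  rcases n.even_or_odd with ⟨m, rfl⟩ | ho
  · -- even, n = m + m ≥ 16, so m + m = (m + m - 1) + 1 with m+m-1 odd
    have hm : 8 ≤ m := by omega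
    obtain ⟨k, hk⟩ : ∃ k, m + m = k + 1 := ⟨m + m - 1, by omega⟩
    have hko : Odd k := by
      rcases k.even_or_odd with he | hok
      · exfalso; rcases he with ⟨j, hj⟩; omega
      · exact hok
    have hk1 : k ≠ 1 := by omega
    rw [hk, primorial_succ hk1 hko]
    calc primorial k * 256 < 4 ^ k := ihn k (by omega) (by omega)
      _ ≤ 4 ^ (k + 1) := Nat.pow_le_pow_right (by norm_num) (by omega)
  · -- odd, n = 2m+1
    obtain ⟨m, rfl⟩ := ho
    have hm : 7 ≤ m := by omega
    have h1 : primorial (2 * m + 1) ≤ primorial (m + 1) * choose (m + 1 + m) (m + 1) := by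
      have := primorial_add_le (m := m + 1) (n := m) (Nat.le_succ m)
      calc primorial (2 * m + 1) = primorial (m + 1 + m) := by ring_nf
        _ ≤ primorial (m + 1) * choose (m + 1 + m) (m + 1) := this
    have h2 : choose (m + 1 + m) (m + 1) ≤ 4 ^ m := by
      have : choose (m + 1 + m) (m + 1) = choose (2 * m + 1) m := by
        rw [choose_symm_add, two_mul, add_right_comm]
      rw [this]
      exact choose_middle_le_pow m
    have h3 : primorial (m + 1) * 256 < 4 ^ (m + 1) := ihn (m + 1) (by omega) (by omega)
    calc primorial (2 * m + 1) * 256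
        ≤ primorial (m + 1) * choose (m + 1 + m) (m + 1) * 256 := by
          exact Nat.mul_le_mul_right _ h1
      _ = (primorial (m + 1) * 256) * choose (m + 1 + m) (m + 1) := by ring
      _ < 4 ^ (m + 1) * 4 ^ m := by
          apply Nat.mul_lt_mul_of_lt_of_le h3 h2
          exact Nat.pow_pos (by norm_num)
      _ = 4 ^ (2 * m + 1) := by rw [← pow_add]; ring_nf
  
theorem theta_lt (x : ℝ) (hx : 8 ≤ x) :
    ∑ p ∈ (Finset.range (⌊x⌋₊ + 1)).filter Nat.Prime, Real.log p
      < (x - 4) * Real.log 4 := by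
  set n := ⌊x⌋₊ with hn
  have hn8 : 8 ≤ n := Nat.le_floor (by exact_mod_cast hx)
  have hnx : (n : ℝ) ≤ x := Nat.floor_le (by linarith)
  have hsum : ∑ p ∈ (Finset.range (n + 1)).filter Nat.Prime, Real.log p
      = Real.log (primorial n) := by
    rw [primorial, Nat.cast_prod, Real.log_prod]
    intro p hp
    have : p.Prime := (Finset.mem_filter.1 hp).2
    exact_mod_cast this.pos.ne'
  rw [hsum]
  have hkey : primorial n * 256 < 4 ^ n := primorial_mul_lt n hn8
  have hlt : (primorial n : ℝ) < 4 ^ ((n : ℝ) - 4) := by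
    have h256 : (256 : ℝ) = 4 ^ (4 : ℝ) := by
      rw [show (4:ℝ) = ((4:ℕ):ℝ) by norm_num, Real.rpow_natCast]; norm_num
    have : (primorial n : ℝ) * 256 < 4 ^ (n : ℝ) := by
      rw [show (4:ℝ)^(n:ℝ) = 4^(n:ℕ) by rw [Real.rpow_natCast]]
      exact_mod_cast hkey
    rw [show ((n:ℝ) - 4) = (n:ℝ) - 4 from rfl, Real.rpow_sub (by norm_num)]
    rw [← h256]
    rw [lt_div_iff₀ (by norm_num)]
    exact this
  have hpos : (0 : ℝ) < primorial n := by exact_mod_cast primorial_pos n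
  calc Real.log (primorial n) < Real.log (4 ^ ((n : ℝ) - 4)) := by
        apply Real.log_lt_log hpos hlt
    _ = ((n : ℝ) - 4) * Real.log 4 := Real.log_rpow (by norm_num) _
    _ ≤ (x - 4) * Real.log 4 := by
        apply mul_le_mul_of_nonneg_right (by linarith)
        positivity
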